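/- There exists a P tensor A (of order 4, dimension 2) and a vector q ∈ ℝ² such that TCP(q,A) has more than one solution. Consequently, 'A is a P tensor' does not imply that TCP(q,A) has the global uniqueness and solvability property. -/
import Mathlib


/-- `(A x^{m-1})_i = ∑_{i_2,…,i_m} a_{i i_2 ⋯ i_m} x_{i_2} ⋯ x_{i_m}`,
for a real tensor of order `k+1` and dimension `n`, encoded as
`A : Fin n → (Fin k → Fin n) → ℝ`. -/
noncomputable def tApply {n k : ℕ} (A : Fin n → (Fin k → Fin n) → ℝ)
    (x : Fin n → ℝ) (i : Fin n) : ℝ :=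
  ∑ f : Fin k → Fin n, A i f * ∏ j, x (f j)

/-- The example tensor: `(A x^3)_0 = x_0^3`, `(A x^3)_1 = x_1^3 - x_0 x_1^2`. -/
noncomputable def myA : Fin 2 → (Fin 3 → Fin 2) → ℝ := fun i f =>
  if i = 0 then (if f = (fun _ => 0) then 1 else 0)
  else (if f = (fun _ => 1) then 1 else 0) + (if f = ![0, 1, 1] then -1 else 0)

lemma tApply_myA_zero (x : Fin 2 → ℝ) : tApply myA x 0 = x 0 ^ 3 := by
  unfold tApply myA
  simp [ite_mul, Finset.sum_ite_eq', Fin.prod_univ_succ]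
  ring

lemma tApply_myA_one (x : Fin 2 → ℝ) :
    tApply myA x 1 = x 1 ^ 3 - x 0 * x 1 ^ 2 := by
  unfold tApply myA
  simp [add_mul, Finset.sum_add_distrib, ite_mul, Finset.sum_ite_eq',
    Fin.prod_univ_succ]
  ring

/-- There exists a P tensor of order 4 and dimension 2 and a
vector q such that TCP(q,A) has more than one solution. -/
theorem stmt_4 :
    ∃ (A : Fin 2 → (Fin 3 → Fin 2) → ℝ) (q : Fin 2 → ℝ),
      (∀ x : Fin 2 → ℝ, x ≠ 0 → ∃ i, x i * tApply A x i > 0) ∧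
      (∃ x y : Fin 2 → ℝ, x ≠ y ∧
        ((∀ i, 0 ≤ x i) ∧ (∀ i, 0 ≤ tApply A x i + q i) ∧
          ∑ i, x i * (tApply A x i + q i) = 0) ∧
        ((∀ i, 0 ≤ y i) ∧ (∀ i, 0 ≤ tApply A y i + q i) ∧
          ∑ i, y i * (tApply A y i + q i) = 0)) := by
  refine ⟨myA, ![-1, 0], ?_, ![1, 0], ![1, 1], ?_, ⟨?_, ?_, ?_⟩, ⟨?_, ?_, ?_⟩⟩
  · intro x hx
    by_cases h0 : x 0 = 0
    · have h1 : x 1 ≠ 0 := by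
        intro h1
        apply hx
        funext i
        fin_cases i <;> simpa [h0, h1]
      refine ⟨1, ?_⟩
      rw [tApply_myA_one, h0]
      have : x 1 ^ 4 > 0 := by positivity
      nlinarith [this]
    · refine ⟨0, ?_⟩
      rw [tApply_myA_zero]
      have : x 0 ^ 4 > 0 := by positivity
      nlinarith [this]
  · intro h
    have := congrFun h 1
    simp at this
  · intro i; fin_cases i <;> norm_num
  · intro i
    fin_cases i <;>
      simp [tApply_myA_zero, tApply_myA_one]
  · simp [Fin.sum_univ_succ, tApply_myA_zero, tApply_myA_one]
  · intro i; fin_cases i <;> norm_num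
  · intro i
    fin_cases i <;>
      simp [tApply_myA_zero, tApply_myA_one]
  · simp [Fin.sum_univ_succ, tApply_myA_zero, tApply_myA_one]
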